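/- For every integer n \geq 1, 0 \leq H_n - ln(n) - \gamma \leq 1/(2n), where H_n = \sum_{i=1}^n 1/i is the n-th harmonic number and \gamma is the Euler–Mascheroni constant. -/

import Mathlib

open Real Filter

lemma aux_log_le (u : ℝ) (hu : 1 ≤ u) : Real.log u ≤ (u - u⁻¹) / 2 := by
  have key : MonotoneOn (fun u : ℝ => (u - u⁻¹) / 2 - Real.log u) (Set.Ici 1) := by
    apply monotoneOn_of_deriv_nonneg (convex_Ici 1)
    · apply ContinuousOn.sub
      · apply ContinuousOn.div_const
        exact continuousOn_id.sub (continuousOn_inv₀.mono (fun x hx => by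
          simp only [Set.mem_Ici] at hx; simp only [Set.mem_compl_iff, Set.mem_singleton_iff]
          intro h; rw [h] at hx; linarith))
      · exact Real.continuousOn_log.mono (fun x hx => by
          simp only [Set.mem_Ici] at hx; simp only [Set.mem_compl_iff, Set.mem_singleton_iff]
          intro h; rw [h] at hx; linarith)
    · intro x hx
      rw [interior_Ici] at hx
      have hx0 : (0:ℝ) < x := by simp only [Set.mem_Ioi] at hx; linarith
      exact (((differentiableAt_id.sub (differentiableAt_inv hx0.ne')).div_const
        2).sub (Real.differentiableAt_log hx0.ne')).differentiableWithinAt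
    · intro x hx
      rw [interior_Ici] at hx
      simp only [Set.mem_Ioi] at hx
      have hx0 : (0:ℝ) < x := by linarith
      have hd : deriv (fun u : ℝ => (u - u⁻¹) / 2 - Real.log u) x
          = (1 - (-(x ^ 2)⁻¹)) / 2 - x⁻¹ := by
        rw [deriv_fun_sub, deriv_div_const, deriv_fun_sub, deriv_id'', Real.deriv_log,
          deriv_inv]
        · exact differentiableAt_id
        · exact differentiableAt_inv hx0.ne'
        · exact (differentiableAt_id.sub (differentiableAt_inv hx0.ne')).div_const _
        · exact Real.differentiableAt_log hx0.ne'
      rw [hd]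
      have h2 : ((x:ℝ) ^ 2)⁻¹ = x⁻¹ ^ 2 := by rw [inv_pow]
      rw [h2]
      nlinarith [sq_nonneg (1 - x⁻¹)]
  have := key (Set.mem_Ici.mpr le_rfl) (Set.mem_Ici.mpr hu) hu
  simp only [Real.log_one, inv_one, sub_self, zero_div, sub_zero] at this
  linarith

lemma aux_log_succ (k : ℕ) (hk : 1 ≤ k) :
    Real.log (k + 1) - Real.log k ≤ 1 / (2 * k) + 1 / (2 * (k + 1)) := by
  have hk0 : (0:ℝ) < k := by exact_mod_cast hk
  have hk1 : (0:ℝ) < k + 1 := by linarith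
  have := aux_log_le ((k + 1) / k) (by rw [le_div_iff₀ hk0]; linarith)
  rw [Real.log_div (by positivity) hk0.ne'] at this
  refine this.trans (le_of_eq ?_)
  field_simp
  ring

lemma aux_telescope (n : ℕ) (hn : 1 ≤ n) : ∀ m, n ≤ m →
    (harmonic n : ℝ) - Real.log n - (1 / (2 * n) - 1 / (2 * m)) ≤
      (harmonic m : ℝ) - Real.log m := by
  intro m hm
  induction m with
  | zero => omega
  | succ m ih =>
    rcases Nat.lt_or_ge n (m + 1) with h | h
    · have hm' : n ≤ m := by omega
      have hm1 : 1 ≤ m := by omega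
      have ihm := ih hm'
      have hlog := aux_log_succ m hm1
      have hh : (harmonic (m + 1) : ℝ) = (harmonic m : ℝ) + 1 / (m + 1) := by
        rw [harmonic_succ]; push_cast; ring
      have hm0 : (0:ℝ) < m := by exact_mod_cast hm1
      push_cast
      push_cast at ihm hlog
      rw [hh]
      have h2 : 1 / ((m:ℝ) + 1) = 2 * (1 / (2 * ((m:ℝ) + 1))) := by
        field_simp
      linarith
    · have : n = m + 1 := by omega
      subst this
      simp

/-- For every `n ≥ 1`, `0 ≤ H_n - ln n - γ ≤ 1/(2n)`, where `H_n` is the `n`-th harmonic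
number and `γ` is the Euler–Mascheroni constant. -/
theorem stmt_4 (n : ℕ) (hn : 1 ≤ n) :
    0 ≤ (harmonic n : ℝ) - Real.log n - Real.eulerMascheroniConstant ∧
      (harmonic n : ℝ) - Real.log n - Real.eulerMascheroniConstant ≤ 1 / (2 * n) := by
  constructor
  · have h := Real.eulerMascheroniConstant_lt_eulerMascheroniSeq' n
    rw [Real.eulerMascheroniSeq', if_neg (by omega)] at h
    linarith
  · have hn0 : (0:ℝ) < n := by exact_mod_cast hn
    have hγ : (harmonic n : ℝ) - Real.log n - 1 / (2 * n) ≤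
        Real.eulerMascheroniConstant := by
      refine ge_of_tendsto Real.tendsto_harmonic_sub_log ?_
      filter_upwards [eventually_ge_atTop n] with m hm
      have := aux_telescope n hn m hm
      have hm0 : (0:ℝ) < m := by
        have : (1:ℕ) ≤ m := le_trans hn hm
        exact_mod_cast this
      have : 0 < 1 / (2 * (m:ℝ)) := by positivity
      linarith
    linarith
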